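/- Let I ⊂ ℕ₀^d be finite with |M(I)| > 1, and set M := nextprime(max(2(|M(I)|-1), 2N_I)), where N_I = max_{k∈I}‖k‖_∞ and nextprime(x) = min{p prime : p > x}. Then reduction mod M is injective on M(I), and moreover M ≤ 4·max(|M(I)|-1, N_I) - 1; consequently |Cos(Λ(z,M))| ≤ 2·max(|M(I)|-1, N_I) for every z ∈ ℤ^d. -/

import Mathlib

open Real

/-- The mirror set `M({k})` of a single multi-index. -/
def mirror {d : ℕ} (k : Fin d → ℕ) : Finset (Fin d → ℤ) :=
  Finset.image (fun l : Fin d → Bool => fun j => if l j then (k j : ℤ) else -(k j : ℤ))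
    Finset.univ

/-- The mirrored index set `M(I) = ⋃_{k ∈ I} M({k})`. -/
def mirrorSet {d : ℕ} (I : Finset (Fin d → ℕ)) : Finset (Fin d → ℤ) :=
  I.biUnion mirror

/-- The maximal occurring power `N_I = max_{k∈I} ‖k‖_∞`. -/
def maxPower {d : ℕ} (I : Finset (Fin d → ℕ)) : ℕ :=
  I.sup fun k => Finset.univ.sup k

/-- The cosine transformed rank-1 lattice
`Cos(Λ(z,M)) = {cos(2π(j/M)z) : j = 0,…,M-1}` (cosine applied componentwise). -/
noncomputable def cosLattice (d : ℕ) (z : Fin d → ℤ) (M : ℕ) : Finset (Fin d → ℝ) :=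
  @Finset.image _ _ (Classical.decEq _)
    (fun j : Fin M => fun i : Fin d => Real.cos (2 * Real.pi * ((j : ℕ) : ℝ) / (M : ℝ) * (z i : ℝ)))
    Finset.univ

/-- Remark `remark_cards_cheb_lattices`, second part: for
`M = nextprime(max(2(|M(I)|-1), 2N_I))` (i.e. the smallest prime exceeding this bound),
reduction mod `M` is injective on `M(I)`, `M ≤ 4·max(|M(I)|-1, N_I) - 1`, and every
cosine transformed rank-1 lattice `Cos(Λ(z,M))` has at most `2·max(|M(I)|-1, N_I)`
points. -/
theorem stmt_19 {d : ℕ} (I : Finset (Fin d → ℕ)) (hMI : 1 < (mirrorSet I).card)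
    (M : ℕ) (hMprime : Nat.Prime M)
    (hMgt : max (2 * ((mirrorSet I).card - 1)) (2 * maxPower I) < M)
    (hMmin : ∀ p : ℕ, Nat.Prime p →
      max (2 * ((mirrorSet I).card - 1)) (2 * maxPower I) < p → M ≤ p) :
    Set.InjOn (fun h : Fin d → ℤ => fun i => h i % (M : ℤ)) (mirrorSet I)
    ∧ M ≤ 4 * max ((mirrorSet I).card - 1) (maxPower I) - 1
    ∧ ∀ z : Fin d → ℤ,
        (cosLattice d z M).card ≤ 2 * max ((mirrorSet I).card - 1) (maxPower I) := by
  classical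
  set n := max ((mirrorSet I).card - 1) (maxPower I) with hn
  have hn1 : 1 ≤ n := le_max_of_le_left (by omega)
  have hM2n : 2 * n < M := by
    have h1 : 2 * ((mirrorSet I).card - 1) < M := lt_of_le_of_lt (le_max_left _ _) hMgt
    have h2 : 2 * maxPower I < M := lt_of_le_of_lt (le_max_right _ _) hMgt
    simp only [hn]; omega
  -- bound M ≤ 4n - 1
  have hMle : M ≤ 4 * n - 1 := by
    obtain ⟨p, hp, hlt, hle⟩ := Nat.exists_prime_lt_and_le_two_mul (2 * n) (by omega)
    have hMp : M ≤ p := by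
      apply hMmin p hp
      have h1 : 2 * ((mirrorSet I).card - 1) ≤ 2 * n := by simp only [hn]; omega
      have h2 : 2 * maxPower I ≤ 2 * n := by simp only [hn]; omega
      omega
    have hne : M ≠ 4 * n := by
      intro h
      have h2 : (2 : ℕ) ∣ M := ⟨2 * n, by omega⟩
      rcases (Nat.Prime.eq_one_or_self_of_dvd hMprime 2 h2) with h' | h' <;> omega
    omega
  refine ⟨?_, hMle, ?_⟩
  · -- injectivity
    have hbound : ∀ h ∈ mirrorSet I, ∀ i, |h i| ≤ (maxPower I : ℤ) := by
      intro h hh i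
      simp only [mirrorSet, Finset.mem_biUnion, mirror, Finset.mem_image] at hh
      obtain ⟨k, hk, l, -, rfl⟩ := hh
      have hki : k i ≤ maxPower I :=
        le_trans (Finset.le_sup (Finset.mem_univ i)) (Finset.le_sup hk)
      by_cases hl : l i <;> simp [hl, abs_le] <;> exact_mod_cast hki
    intro a ha b hb hab
    funext i
    have h1 : a i % (M : ℤ) = b i % (M : ℤ) := congrFun hab i
    have hdvd : (M : ℤ) ∣ b i - a i := Int.ModEq.dvd h1
    have ha' := hbound a ha i
    have hb' := hbound b hb i
    have habs : |b i - a i| < (M : ℤ) := by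
      have hc : (2 * maxPower I : ℤ) < (M : ℤ) := by
        exact_mod_cast lt_of_le_of_lt (le_max_right _ _) hMgt
      rw [abs_le] at ha' hb'
      rw [abs_lt]
      omega
    have hz := Int.eq_zero_of_abs_lt_dvd hdvd habs
    omega
  · -- cardinality of cosLattice
    intro z
    have hModd : M % 2 = 1 := by
      by_cases h2 : 2 ∣ M
      · rcases Nat.Prime.eq_one_or_self_of_dvd hMprime 2 h2 with h' | h' <;> omega
      · omega
    have hM0 : (M : ℝ) ≠ 0 := Nat.cast_ne_zero.mpr hMprime.pos.ne'
    have hsub : cosLattice d z M ⊆ Finset.image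
        (fun j : ℕ => fun i : Fin d => Real.cos (2 * Real.pi * (j : ℝ) / (M : ℝ) * (z i : ℝ)))
        (Finset.range ((M + 1) / 2)) := by
      intro x hx
      simp only [cosLattice, Finset.mem_image, Finset.mem_univ, true_and,
        Finset.mem_range] at hx ⊢
      obtain ⟨j, rfl⟩ := hx
      by_cases hj : 2 * j.val < M + 1
      · exact ⟨j.val, by omega, rfl⟩
      · refine ⟨M - j.val, by have := j.isLt; omega, ?_⟩
        funext i
        have hlt := j.isLt
        have heq : 2 * Real.pi * ((M - j.val : ℕ) : ℝ) / (M : ℝ) * ((z i : ℤ) : ℝ)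
            = ((z i : ℤ) : ℝ) * (2 * Real.pi) - 2 * Real.pi * (j.val : ℝ) / (M : ℝ) * ((z i : ℤ) : ℝ) := by
          push_cast [Nat.cast_sub hlt.le]
          field_simp
        rw [heq, Real.cos_int_mul_two_pi_sub]
    calc (cosLattice d z M).card ≤ _ := Finset.card_le_card hsub
      _ ≤ (Finset.range ((M + 1) / 2)).card := Finset.card_image_le
      _ = (M + 1) / 2 := Finset.card_range _
      _ ≤ 2 * n := by omega
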